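/- Let 0 ≤ Λ₁ ≤ 1 ≤ Λ₂ with Λ₁ < Λ₂, let Δ₁, Δ₂ ≥ 0 and m ∈ ℝ, and set τ := (Λ₂ − 1)/(Λ₂ − Λ₁). Then there exist a probability measure μ on the two-point space Bool and functions λ, η : Bool → ℝ such that Λ₁ ≤ λ ≤ Λ₂ pointwise, ∫ λ dμ = 1, m − Δ₁ ≤ η ≤ m + Δ₂ pointwise, ∫ η dμ = m, and ∫ η·λ dμ = m + (Λ₂ − Λ₁)·min( τ·Δ₁, (1 − τ)·Δ₂ ). -/

import Mathlib

open MeasureTheory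

lemma integral_bool_aux (μ : Measure Bool) [IsFiniteMeasure μ] (f : Bool → ℝ) :
    ∫ b, f b ∂μ = (μ {false}).toReal * f false + (μ {true}).toReal * f true := by
  rw [MeasureTheory.integral_fintype (Integrable.of_finite)]
  simp [Fintype.sum_bool, mul_comm, Measure.real]
  ring

theorem eMSM_relaxed_upper_bound_attained
    (Λ₁ Λ₂ Δ₁ Δ₂ m : ℝ)
    (hΛ₁0 : 0 ≤ Λ₁) (hΛ₁1 : Λ₁ ≤ 1) (hΛ₂1 : 1 ≤ Λ₂) (hΛlt : Λ₁ < Λ₂)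
    (hΔ₁ : 0 ≤ Δ₁) (hΔ₂ : 0 ≤ Δ₂) :
    ∃ (μ : Measure Bool) (lam η : Bool → ℝ), IsProbabilityMeasure μ ∧
      (∀ b, Λ₁ ≤ lam b ∧ lam b ≤ Λ₂) ∧
      (∫ b, lam b ∂μ) = 1 ∧
      (∀ b, m - Δ₁ ≤ η b ∧ η b ≤ m + Δ₂) ∧
      (∫ b, η b ∂μ) = m ∧
      (∫ b, η b * lam b ∂μ) =
        m + (Λ₂ - Λ₁) *
          min (((Λ₂ - 1) / (Λ₂ - Λ₁)) * Δ₁) ((1 - (Λ₂ - 1) / (Λ₂ - Λ₁)) * Δ₂) := by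
  set τ : ℝ := (Λ₂ - 1) / (Λ₂ - Λ₁) with hτdef
  have hΛpos : (0:ℝ) < Λ₂ - Λ₁ := by linarith
  have hτ0 : 0 ≤ τ := div_nonneg (by linarith) (by linarith)
  have hτ1 : τ ≤ 1 := by rw [hτdef, div_le_one hΛpos]; linarith
  set c : ℝ := min (τ * Δ₁) ((1 - τ) * Δ₂) with hcdef
  have hcle1 : c ≤ τ * Δ₁ := min_le_left _ _
  have hcle2 : c ≤ (1 - τ) * Δ₂ := min_le_right _ _
  have hc0 : 0 ≤ c := le_min (mul_nonneg hτ0 hΔ₁) (mul_nonneg (by linarith) hΔ₂)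
  set a : ℝ := if (1 - τ) = 0 then 0 else c / (1 - τ) with hadef
  set bb : ℝ := if τ = 0 then 0 else c / τ with hbdef
  have ha : (1 - τ) * a = c := by
    rw [hadef]; split_ifs with h
    · nlinarith [hcle2]
    · field_simp
  have hb : τ * bb = c := by
    rw [hbdef]; split_ifs with h
    · nlinarith [hcle1]
    · field_simp
  have ha0 : 0 ≤ a := by
    rw [hadef]; split_ifs with h
    · exact le_refl 0
    · exact div_nonneg hc0 (by linarith)
  have haΔ : a ≤ Δ₂ := by
    rw [hadef]; split_ifs with h
    · exact hΔ₂
    · rw [div_le_iff₀ (lt_of_le_of_ne (by linarith) (Ne.symm h))]; nlinarith [hcle2]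
  have hb0 : 0 ≤ bb := by
    rw [hbdef]; split_ifs with h
    · exact le_refl 0
    · exact div_nonneg hc0 hτ0
  have hbΔ : bb ≤ Δ₁ := by
    rw [hbdef]; split_ifs with h
    · exact hΔ₁
    · rw [div_le_iff₀ (lt_of_le_of_ne hτ0 (Ne.symm h))]; nlinarith [hcle1]
  set μ : Measure Bool := (ENNReal.ofReal τ) • Measure.dirac false + (ENNReal.ofReal (1 - τ)) • Measure.dirac true with hμdef
  have hprob : IsProbabilityMeasure μ := by
    constructor
    simp [hμdef, Measure.add_apply, Measure.smul_apply, Measure.dirac_apply,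
      ← ENNReal.ofReal_add hτ0 (by linarith : (0:ℝ) ≤ 1 - τ)]
  haveI := hprob
  refine ⟨μ,
    fun x => if x then Λ₂ else Λ₁, fun x => if x then m + a else m - bb, hprob, ?_, ?_, ?_, ?_, ?_⟩
  · intro x; cases x <;> refine ⟨?_, ?_⟩ <;> simp <;> linarith
  · rw [integral_bool_aux]
    have h1 : (μ {false}).toReal = τ := by
      simp [hμdef, Measure.dirac_apply', ENNReal.toReal_ofReal hτ0]
    have h2 : (μ {true}).toReal = 1 - τ := by
      simp [hμdef, Measure.dirac_apply', ENNReal.toReal_ofReal (by linarith : (0:ℝ) ≤ 1 - τ)]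
    rw [h1, h2]; simp
    rw [hτdef]; field_simp; ring
  · intro x; cases x <;> refine ⟨?_, ?_⟩ <;> simp <;> linarith
  · rw [integral_bool_aux]
    have h1 : (μ {false}).toReal = τ := by
      simp [hμdef, Measure.dirac_apply', ENNReal.toReal_ofReal hτ0]
    have h2 : (μ {true}).toReal = 1 - τ := by
      simp [hμdef, Measure.dirac_apply', ENNReal.toReal_ofReal (by linarith : (0:ℝ) ≤ 1 - τ)]
    rw [h1, h2]; simp
    nlinarith [ha, hb]
  · rw [integral_bool_aux]
    have h1 : (μ {false}).toReal = τ := by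
      simp [hμdef, Measure.dirac_apply', ENNReal.toReal_ofReal hτ0]
    have h2 : (μ {true}).toReal = 1 - τ := by
      simp [hμdef, Measure.dirac_apply', ENNReal.toReal_ofReal (by linarith : (0:ℝ) ≤ 1 - τ)]
    have hτeq : τ * Λ₁ + (1 - τ) * Λ₂ = 1 := by rw [hτdef]; field_simp; ring
    rw [h1, h2]; simp
    linear_combination m * hτeq + Λ₂ * ha - Λ₁ * hb
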